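/- With m = 2 resources, for every rational α ∈ (0, 1/2], the fair approximation ratio for utilization of the DRF mechanism over instances with minority ratio α equals 1/α. Precisely: (i) for every instance with minority ratio α, the DRF allocation has utilization at least α, so every feasible allocation satisfying SI and EF has utilization at most (1/α) times that of the DRF allocation; and (ii) for every ε > 0 there exists an instance with minority ratio α and a feasible allocation satisfying SI and EF whose utilization is at least (1/α − ε) times the utilization of the DRF allocation. -/

import Mathlib

open Finset
open scoped Classical

/-- A valid instance: all demands lie in `(0,1]` and every agent has a resource
with normalized demand `1` (its dominant resource). -/
def ValidInstance {n m : ℕ} (d : Fin n → Fin m → ℝ) : Prop :=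
  (∀ i r, 0 < d i r ∧ d i r ≤ 1) ∧ ∀ i, ∃ r, d i r = 1

/-- Entrywise nonnegative allocation. -/
def NonnegAlloc {n m : ℕ} (A : Fin n → Fin m → ℝ) : Prop := ∀ i r, 0 ≤ A i r

/-- A feasible allocation: nonnegative and no resource over-allocated. -/
def Feasible {n m : ℕ} (A : Fin n → Fin m → ℝ) : Prop :=
  NonnegAlloc A ∧ ∀ r, ∑ i, A i r ≤ 1

/-- Leontief utility of a bundle `Av` for demand vector `dv`:
the largest `y ≥ 0` with `y * dv r ≤ Av r` for all `r`. -/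
noncomputable def util {m : ℕ} (dv Av : Fin m → ℝ) : ℝ :=
  sSup {y : ℝ | 0 ≤ y ∧ ∀ r, y * dv r ≤ Av r}

/-- Share incentive: every agent gets utility at least `1/n`. -/
def SI {n m : ℕ} (d A : Fin n → Fin m → ℝ) : Prop :=
  ∀ i, (1 : ℝ) / n ≤ util (d i) (A i)

/-- Envy-freeness: no agent prefers another agent's bundle. -/
def EF {n m : ℕ} (d A : Fin n → Fin m → ℝ) : Prop :=
  ∀ i j, util (d i) (A j) ≤ util (d i) (A i)

/-- Social welfare: the sum of all utilities. -/
noncomputable def SW {n m : ℕ} (d A : Fin n → Fin m → ℝ) : ℝ :=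
  ∑ i, util (d i) (A i)

/-- Utilization: the minimum over resources of the total allocated amount. -/
noncomputable def Util {n m : ℕ} (A : Fin n → Fin m → ℝ) : ℝ :=
  ⨅ r : Fin m, ∑ i, A i r

/-- Pareto optimality of an allocation. -/
def PO {n m : ℕ} (d A : Fin n → Fin m → ℝ) : Prop :=
  ¬ ∃ A' : Fin n → Fin m → ℝ, Feasible A' ∧
      (∀ i, util (d i) (A i) ≤ util (d i) (A' i)) ∧
      ∃ i, util (d i) (A i) < util (d i) (A' i)

/-- Agents whose dominant resource is resource 1 (index `0`). -/
noncomputable def G1 {n m : ℕ} [NeZero m] (d : Fin n → Fin m → ℝ) : Finset (Fin n) :=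
  Finset.univ.filter (fun i => d i 0 = 1)

/-- Agents whose demand for resource 1 (index `0`) is below `1`. -/
noncomputable def G2 {n m : ℕ} [NeZero m] (d : Fin n → Fin m → ℝ) : Finset (Fin n) :=
  Finset.univ.filter (fun i => d i 0 < 1)

/-- Minority ratio `α = |G2| / n` for two resources. -/
def MinorityRatio {n : ℕ} (d : Fin n → Fin 2 → ℝ) (α : ℚ) : Prop :=
  ((G2 d).card : ℚ) = α * n

/-- The DRF allocation: every agent gets `x* • d i` with
`x* = 1 / max_r Σ_j d j r`. -/
noncomputable def DRF {n m : ℕ} (d : Fin n → Fin m → ℝ) : Fin n → Fin m → ℝ :=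
  fun i r => (1 / ⨆ r' : Fin m, ∑ j, d j r') * d i r

/-- The F1 allocation at water level `t`: agents in `G1` get dominant share `1/n`;
an agent `i` with `d i 0 < 1` gets `max (d i 0 / n) t` of resource 1, i.e. has
scale factor `max (1/n) (t / d i 0)`. -/
noncomputable def F1At {n m : ℕ} [NeZero m] (d : Fin n → Fin m → ℝ) (t : ℝ) :
    Fin n → Fin m → ℝ :=
  fun i r => (if d i 0 = 1 then (1 : ℝ) / n else max ((1 : ℝ) / n) (t / d i 0)) * d i r

/-- The F1 allocation: F1 at the largest feasible water level. -/
noncomputable def F1 {n m : ℕ} [NeZero m] (d : Fin n → Fin m → ℝ) : Fin n → Fin m → ℝ :=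
  F1At d (sSup {t : ℝ | 0 ≤ t ∧ Feasible (F1At d t)})

private lemma fin2_iInf (g : Fin 2 → ℝ) : (⨅ r, g r) = min (g 0) (g 1) := by
  apply le_antisymm
  · exact le_min (ciInf_le (Set.finite_range g).bddBelow 0)
      (ciInf_le (Set.finite_range g).bddBelow 1)
  · apply le_ciInf
    intro r
    fin_cases r
    · exact min_le_left _ _
    · exact min_le_right _ _

private lemma fin2_iSup (g : Fin 2 → ℝ) : (⨆ r, g r) = max (g 0) (g 1) := by
  apply le_antisymm
  · apply ciSup_le; intro r; fin_cases r
    · exact le_max_left _ _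
    · exact le_max_right _ _
  · exact max_le (le_ciSup (Set.finite_range g).bddAbove 0)
      (le_ciSup (Set.finite_range g).bddAbove 1)

private lemma util_eq_min (dv Av : Fin 2 → ℝ) (h0 : 0 < dv 0) (h1 : 0 < dv 1)
    (hA0 : 0 ≤ Av 0) (hA1 : 0 ≤ Av 1) :
    util dv Av = min (Av 0 / dv 0) (Av 1 / dv 1) := by
  have hmem : min (Av 0 / dv 0) (Av 1 / dv 1) ∈ {y : ℝ | 0 ≤ y ∧ ∀ r, y * dv r ≤ Av r} := by
    refine ⟨le_min (div_nonneg hA0 h0.le) (div_nonneg hA1 h1.le), fun r => ?_⟩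
    fin_cases r
    · calc min (Av 0 / dv 0) (Av 1 / dv 1) * dv 0 ≤ (Av 0 / dv 0) * dv 0 :=
            mul_le_mul_of_nonneg_right (min_le_left _ _) h0.le
        _ = Av 0 := div_mul_cancel₀ _ h0.ne'
    · calc min (Av 0 / dv 0) (Av 1 / dv 1) * dv 1 ≤ (Av 1 / dv 1) * dv 1 :=
            mul_le_mul_of_nonneg_right (min_le_right _ _) h1.le
        _ = Av 1 := div_mul_cancel₀ _ h1.ne'
  apply le_antisymm
  · refine csSup_le ⟨_, hmem⟩ ?_
    rintro y ⟨hy0, hy⟩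
    exact le_min ((le_div_iff₀ h0).2 (hy 0)) ((le_div_iff₀ h1).2 (hy 1))
  · exact le_csSup ⟨Av 0 / dv 0, fun y hy => (le_div_iff₀ h0).2 (hy.2 0)⟩ hmem

private lemma sum_ite_lt (n k : ℕ) (hk : k ≤ n) (x y : ℝ) :
    (∑ i : Fin n, if (i : ℕ) < k then x else y) = k * x + ((n : ℝ) - k) * y := by
  rw [Fin.sum_univ_eq_sum_range (fun i => if i < k then x else y)]
  rw [Finset.range_eq_Ico, ← Finset.sum_Ico_consecutive _ (Nat.zero_le k) hk]
  have h1 : ∑ i ∈ Finset.Ico 0 k, (if i < k then x else y) = (k : ℝ) * x := by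
    rw [Finset.sum_congr rfl fun i hi => if_pos (Finset.mem_Ico.mp hi).2]
    simp [Nat.card_Ico, mul_comm]
  have h2 : ∑ i ∈ Finset.Ico k n, (if i < k then x else y) = ((n : ℝ) - k) * y := by
    rw [Finset.sum_congr rfl fun i hi => if_neg (not_lt.mpr (Finset.mem_Ico.mp hi).1)]
    rw [Finset.sum_const, Nat.card_Ico, nsmul_eq_mul]
    push_cast [hk]
    ring
  rw [h1, h2]

private lemma card_filter_lt (n k : ℕ) (hk : k ≤ n) :
    ((Finset.univ : Finset (Fin n)).filter (fun i : Fin n => (i : ℕ) < k)).card = k := by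
  rw [Finset.card_filter, Fin.sum_univ_eq_sum_range (fun i => if i < k then 1 else 0)]
  rw [Finset.range_eq_Ico, ← Finset.sum_Ico_consecutive _ (Nat.zero_le k) hk,
      Finset.sum_congr rfl fun i hi => if_pos (Finset.mem_Ico.mp hi).2,
      Finset.sum_congr rfl fun i hi => if_neg (not_lt.mpr (Finset.mem_Ico.mp hi).1)]
  simp

private lemma key_ineq (a ε δ : ℝ) (ha : 0 < a) (ha2 : a ≤ 1/2) (hε : 0 < ε)
    (hδ : 0 < δ) (hδ2 : δ ≤ 1/2) (hδε : δ ≤ ε * a ^ 2 / 2) :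
    (1 / a - ε) * (a + (1 - a) * δ) ≤ (1 - a * δ) * (1 - a * δ) := by
  have h1 : 1 / a - ε = (1 - ε * a) / a := by field_simp
  rw [h1, div_mul_eq_mul_div, div_le_iff₀ ha]
  nlinarith [mul_nonneg (mul_nonneg (mul_nonneg ha.le (by linarith : (0:ℝ) ≤ 1 - a)) hε.le) hδ.le,
    mul_nonneg (mul_nonneg (mul_nonneg ha.le ha.le) ha.le) (mul_nonneg hδ.le hδ.le),
    mul_nonneg hδ.le (by nlinarith : (0:ℝ) ≤ 1 - 2*a^2),
    mul_nonneg ha.le hδ.le,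
    (by linarith : 2*δ ≤ ε * a^2)]

private lemma util_drf_eq {n : ℕ} (d : Fin n → Fin 2 → ℝ) :
    Util (DRF d) = min ((1 / max (∑ j, d j 0) (∑ j, d j 1)) * ∑ j, d j 0)
                      ((1 / max (∑ j, d j 0) (∑ j, d j 1)) * ∑ j, d j 1) := by
  unfold Util DRF
  rw [fin2_iInf (fun r => ∑ i, (1 / ⨆ r' : Fin 2, ∑ j, d j r') * d i r),
      fin2_iSup (fun r' => ∑ j, d j r'), ← Finset.mul_sum, ← Finset.mul_sum]

set_option maxHeartbeats 1000000 in
/-- With two resources, the fair approximation ratio for utilization of DRF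
over instances with minority ratio `α` equals `1 / α`. -/
theorem drf_util_fair_ratio (α : ℚ) (hα0 : 0 < α) (hα : α ≤ 1 / 2) :
    (∀ (n : ℕ) (d : Fin n → Fin 2 → ℝ), 0 < n → ValidInstance d → MinorityRatio d α →
      ((α : ℝ) ≤ Util (DRF d)) ∧
      ∀ A : Fin n → Fin 2 → ℝ, Feasible A → SI d A → EF d A →
        Util A ≤ (1 / (α : ℝ)) * Util (DRF d)) ∧
    (∀ ε : ℝ, 0 < ε → ∃ (n : ℕ) (d : Fin n → Fin 2 → ℝ), 0 < n ∧
      ValidInstance d ∧ MinorityRatio d α ∧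
      ∃ A : Fin n → Fin 2 → ℝ, Feasible A ∧ SI d A ∧ EF d A ∧
        (1 / (α : ℝ) - ε) * Util (DRF d) ≤ Util A) := by
  have haR : (0:ℝ) < (α:ℝ) := by exact_mod_cast hα0
  have haR2 : (α:ℝ) ≤ 1/2 := by
    have := (Rat.cast_le (K := ℝ)).mpr hα
    push_cast at this
    linarith
  constructor
  · rintro n d hn ⟨hd01, hdom⟩ hM
    have hNE : Nonempty (Fin n) := ⟨⟨0, hn⟩⟩
    have hMR : (((G2 d).card : ℝ)) = (α:ℝ) * n := by exact_mod_cast hM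
    have hpart : (G1 d).card + (G2 d).card = n := by
      have hG2 : G2 d = Finset.univ.filter (fun i : Fin n => ¬ d i 0 = 1) := by
        apply Finset.filter_congr
        intro i _
        constructor
        · intro h; exact ne_of_lt h
        · intro h; exact lt_of_le_of_ne (hd01 i 0).2 h
      rw [hG2]
      unfold G1
      rw [Finset.card_filter_add_card_filter_not, Finset.card_univ, Fintype.card_fin]
    have hG1R : ((G1 d).card : ℝ) = n - (α:ℝ) * n := by
      have : ((G1 d).card : ℝ) + ((G2 d).card : ℝ) = n := by exact_mod_cast hpart
      linarith
    have hSle : ∀ r : Fin 2, ∑ j, d j r ≤ n := by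
      intro r
      calc ∑ j, d j r ≤ ∑ _j : Fin n, (1:ℝ) := Finset.sum_le_sum (fun j _ => (hd01 j r).2)
        _ = n := by simp
    have hS0ge : ((G1 d).card : ℝ) ≤ ∑ j, d j 0 := by
      calc ((G1 d).card : ℝ) = ∑ j ∈ G1 d, (1:ℝ) := by simp
        _ = ∑ j ∈ G1 d, d j 0 := by
            apply Finset.sum_congr rfl
            intro j hj
            exact ((Finset.mem_filter.mp hj).2).symm
        _ ≤ ∑ j, d j 0 := Finset.sum_le_sum_of_subset_of_nonneg (Finset.subset_univ _)
            (fun j _ _ => (hd01 j 0).1.le)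
    have hS1ge : ((G2 d).card : ℝ) ≤ ∑ j, d j 1 := by
      calc ((G2 d).card : ℝ) = ∑ j ∈ G2 d, (1:ℝ) := by simp
        _ = ∑ j ∈ G2 d, d j 1 := by
            apply Finset.sum_congr rfl
            intro j hj
            have hj0 : d j 0 < 1 := (Finset.mem_filter.mp hj).2
            obtain ⟨r, hr⟩ := hdom j
            fin_cases r
            · exact absurd hr (ne_of_lt hj0)
            · exact hr.symm
        _ ≤ ∑ j, d j 1 := Finset.sum_le_sum_of_subset_of_nonneg (Finset.subset_univ _)
            (fun j _ _ => (hd01 j 1).1.le)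
    have hnR : (0:ℝ) < n := by exact_mod_cast hn
    have hS0ge' : (α:ℝ) * n ≤ ∑ j, d j 0 := by nlinarith
    have hS1ge' : (α:ℝ) * n ≤ ∑ j, d j 1 := by nlinarith
    have hS0pos : (0:ℝ) < ∑ j, d j 0 :=
      Finset.sum_pos (fun j _ => (hd01 j 0).1) Finset.univ_nonempty
    have hMpos : (0:ℝ) < max (∑ j, d j 0) (∑ j, d j 1) := lt_max_of_lt_left hS0pos
    have hMle : max (∑ j, d j 0) (∑ j, d j 1) ≤ n := max_le (hSle 0) (hSle 1)
    have hDRFge : (α:ℝ) ≤ Util (DRF d) := by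
      rw [util_drf_eq d]
      have key : ∀ S : ℝ, (α:ℝ) * n ≤ S →
          (α:ℝ) ≤ (1 / max (∑ j, d j 0) (∑ j, d j 1)) * S := by
        intro S hS
        rw [one_div_mul_eq_div, le_div_iff₀ hMpos]
        nlinarith
      exact le_min (key _ hS0ge') (key _ hS1ge')
    refine ⟨hDRFge, ?_⟩
    intro A hA _ _
    have hAle : Util A ≤ 1 := by
      calc Util A ≤ ∑ i, A i 0 :=
            ciInf_le (Set.finite_range _).bddBelow 0
        _ ≤ 1 := hA.2 0
    calc Util A ≤ 1 := hAle
      _ = (1 / (α:ℝ)) * (α:ℝ) := by field_simp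
      _ ≤ (1 / (α:ℝ)) * Util (DRF d) := by
          apply mul_le_mul_of_nonneg_left hDRFge
          positivity
  · intro ε hε
    set a : ℝ := (α : ℝ) with ha_def
    set δ : ℝ := min (1/2) (ε * a^2 / 2) with hδ_def
    have hδ0 : 0 < δ := lt_min (by norm_num) (by positivity)
    have hδ2 : δ ≤ 1/2 := min_le_left _ _
    have hδε : δ ≤ ε * a^2 / 2 := min_le_right _ _
    have hδ1 : (0:ℝ) < 1 - δ := by linarith
    set n := α.den with hn_def
    set k := α.num.toNat with hk_def
    have hn : 0 < n := α.pos
    have hkq : (k : ℚ) = α * n := by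
      have h0 := Rat.num_div_den α
      rw [div_eq_iff (by exact_mod_cast α.pos.ne' : ((α.den:ℚ) ≠ 0))] at h0
      have h2 : ((α.num.toNat : ℚ)) = ((α.num : ℚ)) := by
        exact_mod_cast congrArg (Int.cast : ℤ → ℚ)
          (Int.toNat_of_nonneg (Rat.num_nonneg.mpr hα0.le))
      rw [hk_def, h2]
      exact h0
    have hnR : (0:ℝ) < (n:ℝ) := by exact_mod_cast hn
    have hkR : (k:ℝ) = a * n := by
      have h3 := congrArg (fun q : ℚ => (q:ℝ)) hkq
      push_cast at h3
      rw [ha_def]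
      exact h3
    have hk1 : 1 ≤ k := by
      have : 0 < α.num := Rat.num_pos.mpr hα0
      rw [hk_def]
      omega
    have hkRpos : (0:ℝ) < (k:ℝ) := by exact_mod_cast hk1
    have hknR : (k:ℝ) ≤ (n:ℝ) := by nlinarith
    have hkn : k ≤ n := by exact_mod_cast hknR
    have h2k : 2*(k:ℝ) ≤ (n:ℝ) := by nlinarith
    set d : Fin n → Fin 2 → ℝ := fun i r =>
      if (i:ℕ) < k then (if r = 0 then 1 - δ else 1) else (if r = 0 then 1 else δ) with hd_def
    set e : ℝ := ((n:ℝ) - k) * (1 - δ) / (k * n) with he_def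
    have he0 : 0 ≤ e := by
      rw [he_def]
      apply div_nonneg
      · nlinarith
      · positivity
    set A : Fin n → Fin 2 → ℝ := fun i r =>
      if (i:ℕ) < k then (if r = 0 then (1-δ)/n else 1/n + e)
      else (if r = 0 then 1/n else δ/n) with hA_def
    have hd00 : ∀ i : Fin n, (i:ℕ) < k → d i 0 = 1 - δ := fun i h => by simp [hd_def, h]
    have hd01' : ∀ i : Fin n, (i:ℕ) < k → d i 1 = 1 := fun i h => by simp [hd_def, h]
    have hd10 : ∀ i : Fin n, ¬ (i:ℕ) < k → d i 0 = 1 := fun i h => by simp [hd_def, h]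
    have hd11 : ∀ i : Fin n, ¬ (i:ℕ) < k → d i 1 = δ := fun i h => by simp [hd_def, h]
    have hA00 : ∀ i : Fin n, (i:ℕ) < k → A i 0 = (1-δ)/n := fun i h => by simp [hA_def, h]
    have hA01 : ∀ i : Fin n, (i:ℕ) < k → A i 1 = 1/n + e := fun i h => by simp [hA_def, h]
    have hA10 : ∀ i : Fin n, ¬ (i:ℕ) < k → A i 0 = 1/n := fun i h => by simp [hA_def, h]
    have hA11 : ∀ i : Fin n, ¬ (i:ℕ) < k → A i 1 = δ/n := fun i h => by simp [hA_def, h]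
    have hAnn : ∀ i r, 0 ≤ A i r := by
      intro i r
      by_cases h : (i:ℕ) < k <;> fin_cases r
      · show 0 ≤ A i 0; rw [hA00 i h]; positivity
      · show 0 ≤ A i 1; rw [hA01 i h]; positivity
      · show 0 ≤ A i 0; rw [hA10 i h]; positivity
      · show 0 ≤ A i 1; rw [hA11 i h]; positivity
    have hsum_d0 : ∑ j, d j 0 = (k:ℝ)*(1-δ) + ((n:ℝ)-k)*1 := by
      rw [← sum_ite_lt n k hkn (1-δ) 1]
      apply Finset.sum_congr rfl
      intro j _
      by_cases h : (j:ℕ) < k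
      · rw [hd00 j h, if_pos h]
      · rw [hd10 j h, if_neg h]
    have hsum_d1 : ∑ j, d j 1 = (k:ℝ)*1 + ((n:ℝ)-k)*δ := by
      rw [← sum_ite_lt n k hkn 1 δ]
      apply Finset.sum_congr rfl
      intro j _
      by_cases h : (j:ℕ) < k
      · rw [hd01' j h, if_pos h]
      · rw [hd11 j h, if_neg h]
    have hsum_A0 : ∑ i, A i 0 = ((n:ℝ) - k*δ)/n := by
      have h1 : ∑ i, A i 0 = (k:ℝ)*((1-δ)/n) + ((n:ℝ)-k)*(1/n) := by
        rw [← sum_ite_lt n k hkn ((1-δ)/n) (1/n)]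
        apply Finset.sum_congr rfl
        intro j _
        by_cases h : (j:ℕ) < k
        · rw [hA00 j h, if_pos h]
        · rw [hA10 j h, if_neg h]
      rw [h1]
      field_simp
      ring
    have hsum_A1 : ∑ i, A i 1 = 1 := by
      have h1 : ∑ i, A i 1 = (k:ℝ)*(1/n + e) + ((n:ℝ)-k)*(δ/n) := by
        rw [← sum_ite_lt n k hkn (1/n + e) (δ/n)]
        apply Finset.sum_congr rfl
        intro j _
        by_cases h : (j:ℕ) < k
        · rw [hA01 j h, if_pos h]
        · rw [hA11 j h, if_neg h]
      rw [h1, he_def]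
      field_simp
      ring
    have hutil_own : ∀ i : Fin n, util (d i) (A i) = 1/(n:ℝ) := by
      intro i
      by_cases h : (i:ℕ) < k
      · rw [util_eq_min (d i) (A i) (by rw [hd00 i h]; linarith) (by rw [hd01' i h]; norm_num)
          (hAnn i 0) (hAnn i 1)]
        rw [hd00 i h, hd01' i h, hA00 i h, hA01 i h, div_one]
        rw [show ((1-δ)/(n:ℝ))/(1-δ) = 1/(n:ℝ) by field_simp]
        exact min_eq_left (by linarith)
      · rw [util_eq_min (d i) (A i) (by rw [hd10 i h]; norm_num) (by rw [hd11 i h]; linarith)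
          (hAnn i 0) (hAnn i 1)]
        rw [hd10 i h, hd11 i h, hA10 i h, hA11 i h, div_one]
        rw [show (δ/(n:ℝ))/δ = 1/(n:ℝ) by field_simp]
        exact min_self _
    refine ⟨n, d, hn, ⟨?_, ?_⟩, ?_, A, ⟨hAnn, ?_⟩, ?_, ?_, ?_⟩
    · -- demands in (0,1]
      intro i r
      by_cases h : (i:ℕ) < k <;> fin_cases r
      · show 0 < d i 0 ∧ d i 0 ≤ 1; rw [hd00 i h]; constructor <;> linarith
      · show 0 < d i 1 ∧ d i 1 ≤ 1; rw [hd01' i h]; norm_num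
      · show 0 < d i 0 ∧ d i 0 ≤ 1; rw [hd10 i h]; norm_num
      · show 0 < d i 1 ∧ d i 1 ≤ 1; rw [hd11 i h]; constructor <;> linarith
    · -- dominant resource
      intro i
      by_cases h : (i:ℕ) < k
      · exact ⟨1, hd01' i h⟩
      · exact ⟨0, hd10 i h⟩
    · -- minority ratio
      have hG2eq : G2 d = Finset.univ.filter (fun i : Fin n => (i:ℕ) < k) := by
        unfold G2
        apply Finset.filter_congr
        intro i _
        by_cases h : (i:ℕ) < k
        · simp only [h, iff_true]
          rw [hd00 i h]
          linarith
        · simp only [h, iff_false, not_lt]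
          rw [hd10 i h]
      unfold MinorityRatio
      rw [hG2eq, card_filter_lt n k hkn]
      exact hkq
    · -- capacity constraints
      intro r
      fin_cases r
      · show ∑ i, A i 0 ≤ 1
        rw [hsum_A0, div_le_one hnR]; nlinarith
      · show ∑ i, A i 1 ≤ 1
        exact hsum_A1.le
    · -- SI
      intro i
      exact (hutil_own i).ge
    · -- EF
      intro i j
      rw [hutil_own i]
      by_cases hi : (i:ℕ) < k <;> by_cases hj : (j:ℕ) < k
      · have hAji : A j = A i := funext fun r => by simp [hA_def, hi, hj]
        rw [hAji]
        exact (hutil_own i).le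
      · rw [util_eq_min (d i) (A j) (by rw [hd00 i hi]; linarith) (by rw [hd01' i hi]; norm_num)
          (hAnn j 0) (hAnn j 1)]
        calc min (A j 0 / d i 0) (A j 1 / d i 1) ≤ A j 1 / d i 1 := min_le_right _ _
          _ = δ/(n:ℝ) := by rw [hA11 j hj, hd01' i hi, div_one]
          _ ≤ 1/(n:ℝ) := by rw [div_le_div_iff₀ hnR hnR]; nlinarith
      · rw [util_eq_min (d i) (A j) (by rw [hd10 i hi]; norm_num) (by rw [hd11 i hi]; linarith)
          (hAnn j 0) (hAnn j 1)]
        calc min (A j 0 / d i 0) (A j 1 / d i 1) ≤ A j 0 / d i 0 := min_le_left _ _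
          _ = (1-δ)/(n:ℝ) := by rw [hA00 j hj, hd10 i hi, div_one]
          _ ≤ 1/(n:ℝ) := by rw [div_le_div_iff₀ hnR hnR]; nlinarith
      · have hAji : A j = A i := funext fun r => by simp [hA_def, hi, hj]
        rw [hAji]
        exact (hutil_own i).le
    · -- the utilization inequality
      have hS1leS0 : (k:ℝ)*1 + ((n:ℝ)-k)*δ ≤ (k:ℝ)*(1-δ) + ((n:ℝ)-k)*1 := by nlinarith
      have hS0pos : (0:ℝ) < (k:ℝ)*(1-δ) + ((n:ℝ)-k)*1 := by nlinarith
      have hUtilA : Util A = ((n:ℝ) - k*δ)/n := by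
        unfold Util
        rw [fin2_iInf (fun r => ∑ i, A i r)]
        show min (∑ i, A i 0) (∑ i, A i 1) = ((n:ℝ) - k*δ)/n
        rw [hsum_A0, hsum_A1]
        exact min_eq_left (by rw [div_le_one hnR]; nlinarith)
      have hUtilDRF : Util (DRF d) =
          ((k:ℝ)*1 + ((n:ℝ)-k)*δ) / ((k:ℝ)*(1-δ) + ((n:ℝ)-k)*1) := by
        rw [util_drf_eq d, hsum_d0, hsum_d1, max_eq_left hS1leS0,
            one_div_mul_eq_div, one_div_mul_eq_div]
        rw [min_eq_right (by rw [div_le_div_iff₀ hS0pos hS0pos]; nlinarith)]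
      rw [hUtilA, hUtilDRF]
      have e0 : (k:ℝ)*1 + ((n:ℝ)-k)*δ = (n:ℝ)*(a + (1-a)*δ) := by rw [hkR]; ring
      have e1 : (k:ℝ)*(1-δ) + ((n:ℝ)-k)*1 = (n:ℝ)*(1-a*δ) := by rw [hkR]; ring
      have e2 : ((n:ℝ) - k*δ)/n = 1 - a*δ := by
        rw [hkR]
        field_simp
      rw [e0, e1, e2, mul_div_mul_left _ _ hnR.ne']
      have h1aδ : (0:ℝ) < 1 - a*δ := by nlinarith
      rw [← mul_div_assoc, div_le_iff₀ h1aδ]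
      exact key_ineq a ε δ haR haR2 hε hδ0 hδ2 hδε
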